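/- Let n ≥ 3 and k be integers with 3 ≤ k ≤ n, K a real number, and let h₁, …, hₙ be real numbers with h₁ + h₂ + ⋯ + hₙ = K. Then f(h₁,…,hₙ) = ((n−2)/(2(n−1))) · K² if and only if h₁ = 0 and h₂ = h₃ = ⋯ = hₙ = K/(n−1). -/
import Mathlib


open Finset

/-- The quadratic form `f(h₁,…,hₙ) = Σ_{1≤i<j≤n} hᵢhⱼ − (1/(k−1)) · h₁ · Σ_{i=2}^{k} hᵢ`
(indices written 0-based: `h₁ = h 0`, and `Σ_{i=2}^{k}` becomes the sum over `1 ≤ i < k`). -/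
noncomputable def chenF (n k : ℕ) (hn : 3 ≤ n) (h : Fin n → ℝ) : ℝ :=
  (∑ i : Fin n, ∑ j : Fin n, if i < j then h i * h j else 0)
    - (1 / ((k : ℝ) - 1)) * h ⟨0, by omega⟩ *
      (∑ i : Fin n, if 1 ≤ (i : ℕ) ∧ (i : ℕ) < k then h i else 0)

lemma chen_pairSum (n : ℕ) (h : Fin n → ℝ) :
    (∑ i : Fin n, ∑ j : Fin n, if i < j then h i * h j else 0)
      = ((∑ i, h i) ^ 2 - ∑ i, h i ^ 2) / 2 := by
  have expand : ∀ i j : Fin n, h i * h j =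
      (if i < j then h i * h j else 0) + (if j < i then h i * h j else 0)
        + (if i = j then h i * h j else 0) := by
    intro i j
    rcases lt_trichotomy i j with hij | hij | hij
    · simp [hij, asymm hij, hij.ne]
    · simp [hij, lt_irrefl]
    · simp [hij, asymm hij, (ne_of_lt hij).symm]
  have key : (∑ i, h i) ^ 2
      = (∑ i : Fin n, ∑ j : Fin n, if i < j then h i * h j else 0) * 2
        + ∑ i, h i ^ 2 := by
    calc (∑ i, h i) ^ 2 = ∑ i : Fin n, ∑ j : Fin n, h i * h j := by
          rw [sq, Finset.sum_mul_sum]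
      _ = (∑ i : Fin n, ∑ j : Fin n, if i < j then h i * h j else 0)
            + (∑ i : Fin n, ∑ j : Fin n, if j < i then h i * h j else 0)
            + (∑ i : Fin n, ∑ j : Fin n, if i = j then h i * h j else 0) := by
          rw [← Finset.sum_add_distrib, ← Finset.sum_add_distrib]
          refine Finset.sum_congr rfl fun i _ => ?_
          rw [← Finset.sum_add_distrib, ← Finset.sum_add_distrib]
          exact Finset.sum_congr rfl fun j _ => expand i j
      _ = (∑ i : Fin n, ∑ j : Fin n, if i < j then h i * h j else 0) * 2
            + ∑ i, h i ^ 2 := by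
          have e2 : (∑ i : Fin n, ∑ j : Fin n, if j < i then h i * h j else 0)
              = (∑ i : Fin n, ∑ j : Fin n, if i < j then h i * h j else 0) := by
            rw [Finset.sum_comm]
            refine Finset.sum_congr rfl fun i _ => Finset.sum_congr rfl fun j _ => ?_
            rw [mul_comm]
          have e3 : (∑ i : Fin n, ∑ j : Fin n, if i = j then h i * h j else 0)
              = ∑ i, h i ^ 2 := by
            refine Finset.sum_congr rfl fun i _ => ?_
            rw [Finset.sum_ite_eq]
            simp [sq]
          rw [e2, e3]; ring
  linarith

lemma chen_count (n : ℕ) (p : ℕ → Prop) [DecidablePred p] :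
    (∑ i : Fin n, if p (i : ℕ) then (1 : ℝ) else 0)
      = (((Finset.range n).filter p).card : ℝ) := by
  rw [Fin.sum_univ_eq_sum_range (fun j => if p j then (1:ℝ) else 0) n, Finset.sum_boole]

lemma chen_ite_const (n : ℕ) (p : Fin n → Prop) [DecidablePred p] (x : ℝ) :
    (∑ i : Fin n, if p i then x else 0)
      = (∑ i : Fin n, if p i then (1 : ℝ) else 0) * x := by
  rw [Finset.sum_mul]
  exact Finset.sum_congr rfl fun i _ => by split_ifs with hp <;> simp

lemma chen_ite_smul (n : ℕ) (p : Fin n → Prop) [DecidablePred p] (x : ℝ) (f : Fin n → ℝ) :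
    (∑ i : Fin n, if p i then x * f i else 0)
      = x * (∑ i : Fin n, if p i then f i else 0) := by
  rw [Finset.mul_sum]
  exact Finset.sum_congr rfl fun i _ => by split_ifs with hp <;> simp

lemma chen_split (n k : ℕ) (hn : 0 < n) (hk : 1 ≤ k) (f : Fin n → ℝ) :
    ∑ i, f i = f ⟨0, hn⟩ + (∑ i : Fin n, if 1 ≤ (i : ℕ) ∧ (i : ℕ) < k then f i else 0)
      + (∑ i : Fin n, if k ≤ (i : ℕ) then f i else 0) := by
  have key : ∀ i : Fin n, f i = (if (⟨0, hn⟩ : Fin n) = i then f i else 0)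
      + (if 1 ≤ (i : ℕ) ∧ (i : ℕ) < k then f i else 0)
      + (if k ≤ (i : ℕ) then f i else 0) := by
    intro i
    by_cases h0 : (i : ℕ) = 0
    · have e : (⟨0, hn⟩ : Fin n) = i := Fin.ext h0.symm
      have n2 : ¬(1 ≤ (i : ℕ) ∧ (i : ℕ) < k) := by omega
      have n3 : ¬(k ≤ (i : ℕ)) := by omega
      rw [if_pos e, if_neg n2, if_neg n3]; ring
    · have e : (⟨0, hn⟩ : Fin n) ≠ i := Fin.ne_of_val_ne (show (0:ℕ) ≠ (i:ℕ) by omega)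
      by_cases hik : (i : ℕ) < k
      · have p2 : 1 ≤ (i : ℕ) ∧ (i : ℕ) < k := ⟨by omega, hik⟩
        have n3 : ¬(k ≤ (i : ℕ)) := by omega
        rw [if_neg e, if_pos p2, if_neg n3]; ring
      · have n2 : ¬(1 ≤ (i : ℕ) ∧ (i : ℕ) < k) := by omega
        have p3 : k ≤ (i : ℕ) := by omega
        rw [if_neg e, if_neg n2, if_pos p3]; ring
  calc ∑ i, f i = ∑ i : Fin n, ((if (⟨0, hn⟩ : Fin n) = i then f i else 0)
        + (if 1 ≤ (i : ℕ) ∧ (i : ℕ) < k then f i else 0)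
        + (if k ≤ (i : ℕ) then f i else 0)) := Finset.sum_congr rfl fun i _ => key i
    _ = _ := by
        rw [Finset.sum_add_distrib, Finset.sum_add_distrib, Finset.sum_ite_eq]
        simp

set_option maxHeartbeats 1000000 in
theorem stmt_1 (n k : ℕ) (hn : 3 ≤ n) (hk : 3 ≤ k) (hkn : k ≤ n)
    (K : ℝ) (h : Fin n → ℝ) (hsum : ∑ i, h i = K) :
    chenF n k hn h = ((n : ℝ) - 2) / (2 * ((n : ℝ) - 1)) * K ^ 2 ↔
      (h ⟨0, by omega⟩ = 0 ∧ ∀ i : Fin n, 1 ≤ (i : ℕ) → h i = K / ((n : ℝ) - 1)) := by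
  have hn0 : 0 < n := by omega
  have hnR : (3 : ℝ) ≤ (n : ℝ) := by exact_mod_cast hn
  have hkR : (3 : ℝ) ≤ (k : ℝ) := by exact_mod_cast hk
  set t : ℝ := (k : ℝ) - 1 with ht_def
  have ht2 : (2 : ℝ) ≤ t := by rw [ht_def]; linarith
  have ht0 : t ≠ 0 := by linarith
  have hm0 : (n : ℝ) - 1 ≠ 0 := by linarith
  set c : ℝ := K / ((n : ℝ) - 1) with hc_def
  set a : ℝ := h ⟨0, hn0⟩ with ha_def
  set q1 : ℝ := ∑ i : Fin n, if 1 ≤ (i : ℕ) ∧ (i : ℕ) < k then (h i - c) ^ 2 else 0 with hq1_def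
  set q2 : ℝ := ∑ i : Fin n, if k ≤ (i : ℕ) then (h i - c) ^ 2 else 0 with hq2_def
  set D : ℝ := ∑ i : Fin n, if 1 ≤ (i : ℕ) ∧ (i : ℕ) < k then (h i - c) else 0 with hD_def
  set s : ℝ := ∑ i : Fin n, if 1 ≤ (i : ℕ) ∧ (i : ℕ) < k then h i else 0 with hs_def
  set u : ℝ := ∑ i : Fin n, if k ≤ (i : ℕ) then h i else 0 with hu_def
  -- counting
  have count2 : (∑ i : Fin n, if 1 ≤ (i : ℕ) ∧ (i : ℕ) < k then (1 : ℝ) else 0) = t := by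
    rw [chen_count n (fun j => 1 ≤ j ∧ j < k)]
    have e : (Finset.range n).filter (fun j => 1 ≤ j ∧ j < k) = Finset.Ico 1 k := by
      ext j; simp only [Finset.mem_filter, Finset.mem_range, Finset.mem_Ico]; omega
    rw [e, Nat.card_Ico, ht_def]
    push_cast [Nat.cast_sub (by omega : 1 ≤ k)]
    ring
  have count3 : (∑ i : Fin n, if k ≤ (i : ℕ) then (1 : ℝ) else 0) = (n : ℝ) - (k : ℝ) := by
    rw [chen_count n (fun j => k ≤ j)]
    have e : (Finset.range n).filter (fun j => k ≤ j) = Finset.Ico k n := by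
      ext j; simp only [Finset.mem_filter, Finset.mem_range, Finset.mem_Ico]; omega
    rw [e, Nat.card_Ico]
    push_cast [Nat.cast_sub hkn]
    ring
  -- sum identities
  have hD : D = s - t * c := by
    calc D = ∑ i : Fin n, ((if 1 ≤ (i : ℕ) ∧ (i : ℕ) < k then h i else 0)
          - (if 1 ≤ (i : ℕ) ∧ (i : ℕ) < k then c else 0)) := by
          rw [hD_def]
          exact Finset.sum_congr rfl fun i _ => by
            split_ifs with hc2 <;> simp
      _ = s - ∑ i : Fin n, (if 1 ≤ (i : ℕ) ∧ (i : ℕ) < k then c else 0) := by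
          rw [Finset.sum_sub_distrib]
      _ = s - t * c := by rw [chen_ite_const, count2]
  have hq1 : q1 = (∑ i : Fin n, if 1 ≤ (i : ℕ) ∧ (i : ℕ) < k then h i ^ 2 else 0)
      - 2 * c * s + t * c ^ 2 := by
    calc q1 = ∑ i : Fin n, ((if 1 ≤ (i : ℕ) ∧ (i : ℕ) < k then h i ^ 2 else 0)
          - (if 1 ≤ (i : ℕ) ∧ (i : ℕ) < k then 2 * c * h i else 0)
          + (if 1 ≤ (i : ℕ) ∧ (i : ℕ) < k then c ^ 2 else 0)) := by
          rw [hq1_def]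
          refine Finset.sum_congr rfl fun i _ => ?_
          split_ifs with hc2 <;> ring
      _ = (∑ i : Fin n, if 1 ≤ (i : ℕ) ∧ (i : ℕ) < k then h i ^ 2 else 0)
          - (∑ i : Fin n, if 1 ≤ (i : ℕ) ∧ (i : ℕ) < k then 2 * c * h i else 0)
          + (∑ i : Fin n, if 1 ≤ (i : ℕ) ∧ (i : ℕ) < k then c ^ 2 else 0) := by
          rw [Finset.sum_add_distrib, Finset.sum_sub_distrib]
      _ = _ := by rw [chen_ite_smul, chen_ite_const, count2, ← hs_def]; try ring
  have hq2 : q2 = (∑ i : Fin n, if k ≤ (i : ℕ) then h i ^ 2 else 0)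
      - 2 * c * u + ((n : ℝ) - (k : ℝ)) * c ^ 2 := by
    calc q2 = ∑ i : Fin n, ((if k ≤ (i : ℕ) then h i ^ 2 else 0)
          - (if k ≤ (i : ℕ) then 2 * c * h i else 0)
          + (if k ≤ (i : ℕ) then c ^ 2 else 0)) := by
          rw [hq2_def]
          refine Finset.sum_congr rfl fun i _ => ?_
          split_ifs with hc2 <;> ring
      _ = (∑ i : Fin n, if k ≤ (i : ℕ) then h i ^ 2 else 0)
          - (∑ i : Fin n, if k ≤ (i : ℕ) then 2 * c * h i else 0)
          + (∑ i : Fin n, if k ≤ (i : ℕ) then c ^ 2 else 0) := by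
          rw [Finset.sum_add_distrib, Finset.sum_sub_distrib]
      _ = _ := by rw [chen_ite_smul, chen_ite_const, count3, ← hu_def]; try ring
  have hsplit : K = a + s + u := by
    rw [← hsum, chen_split n k hn0 (by omega) h, ha_def, hs_def, hu_def]
  have hsq : (∑ i : Fin n, h i ^ 2)
      = a ^ 2 + (∑ i : Fin n, if 1 ≤ (i : ℕ) ∧ (i : ℕ) < k then h i ^ 2 else 0)
        + (∑ i : Fin n, if k ≤ (i : ℕ) then h i ^ 2 else 0) :=
    chen_split n k hn0 (by omega) (fun i => h i ^ 2)
  -- the key reformulation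
  have key : chenF n k hn h - ((n : ℝ) - 2) / (2 * ((n : ℝ) - 1)) * K ^ 2
      = -(t * a ^ 2 + 2 * a * D + t * q1 + t * q2) / (2 * t) := by
    have hw1 : (∑ i : Fin n, if 1 ≤ (i : ℕ) ∧ (i : ℕ) < k then h i ^ 2 else 0)
        = q1 + 2 * c * s - t * c ^ 2 := by rw [hq1]; ring
    have hw2 : (∑ i : Fin n, if k ≤ (i : ℕ) then h i ^ 2 else 0)
        = q2 + 2 * c * u - ((n : ℝ) - (k : ℝ)) * c ^ 2 := by rw [hq2]; ring
    have hs' : s = D + t * c := by rw [hD]; ring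
    have hu' : u = K - a - s := by rw [hsplit]; ring
    have hh0 : h ⟨0, by omega⟩ = a := rfl
    simp only [chenF]
    rw [chen_pairSum, hsum, hsq, hw1, hw2, hu', hs', hh0, ← hs_def, hs', ← ht_def, hc_def]
    field_simp
    ring
  have h2t : (2 * t) ≠ 0 := by positivity
  have main : chenF n k hn h = ((n : ℝ) - 2) / (2 * ((n : ℝ) - 1)) * K ^ 2
      ↔ t * a ^ 2 + 2 * a * D + t * q1 + t * q2 = 0 := by
    rw [← sub_eq_zero, key, neg_div, neg_eq_zero, div_eq_zero_iff, or_iff_left h2t]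
  rw [main]
  -- nonnegativity and Cauchy-Schwarz
  have hq1nn : 0 ≤ q1 := Finset.sum_nonneg fun i _ => by positivity
  have hq2nn : 0 ≤ q2 := Finset.sum_nonneg fun i _ => by positivity
  have cauchy : D ^ 2 ≤ t * q1 := by
    have hcs := Finset.sum_mul_sq_le_sq_mul_sq Finset.univ
      (fun i : Fin n => if 1 ≤ (i : ℕ) ∧ (i : ℕ) < k then (1 : ℝ) else 0)
      (fun i : Fin n => if 1 ≤ (i : ℕ) ∧ (i : ℕ) < k then h i - c else 0)
    have e1 : (∑ i : Fin n, (if 1 ≤ (i : ℕ) ∧ (i : ℕ) < k then (1 : ℝ) else 0)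
        * (if 1 ≤ (i : ℕ) ∧ (i : ℕ) < k then h i - c else 0)) = D := by
      rw [hD_def]
      refine Finset.sum_congr rfl fun i _ => ?_
      split_ifs with hc2 <;> simp
    have e2 : (∑ i : Fin n, (if 1 ≤ (i : ℕ) ∧ (i : ℕ) < k then (1 : ℝ) else 0) ^ 2) = t := by
      rw [← count2]
      refine Finset.sum_congr rfl fun i _ => ?_
      split_ifs with hc2 <;> simp
    have e3 : (∑ i : Fin n, (if 1 ≤ (i : ℕ) ∧ (i : ℕ) < k then h i - c else 0) ^ 2) = q1 := by
      rw [hq1_def]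
      refine Finset.sum_congr rfl fun i _ => ?_
      split_ifs with hc2 <;> simp
    rw [e1, e2, e3] at hcs
    exact hcs
  constructor
  · -- forward direction
    intro hY
    have ha2 : a ^ 2 ≤ 0 := by
      nlinarith [sq_nonneg (a + D), cauchy, hq2nn, ht2,
        mul_nonneg (by linarith : (0:ℝ) ≤ t - 2) (sq_nonneg a),
        mul_nonneg (by linarith : (0:ℝ) ≤ t) hq2nn]
    have ha : a = 0 := by
      have := le_antisymm ha2 (sq_nonneg a)
      exact (pow_eq_zero_iff two_ne_zero).mp this
    rw [ha] at hY
    have hq1z : q1 = 0 := by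
      refine le_antisymm ?_ hq1nn
      nlinarith [mul_nonneg (by linarith : (0:ℝ) ≤ t) hq2nn, ht2, hq1nn]
    have hq2z : q2 = 0 := by
      refine le_antisymm ?_ hq2nn
      nlinarith [mul_nonneg (by linarith : (0:ℝ) ≤ t) hq1nn, ht2, hq2nn]
    have hsum1 : (∑ i : Fin n, if 1 ≤ (i : ℕ) ∧ (i : ℕ) < k then (h i - c) ^ 2 else 0) = 0 := by
      rw [← hq1_def]; exact hq1z
    have hsum2 : (∑ i : Fin n, if k ≤ (i : ℕ) then (h i - c) ^ 2 else 0) = 0 := by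
      rw [← hq2_def]; exact hq2z
    have hall1 := (Finset.sum_eq_zero_iff_of_nonneg
      (fun (i : Fin n) (_ : i ∈ Finset.univ) =>
        (by positivity : (0:ℝ) ≤ if 1 ≤ (i : ℕ) ∧ (i : ℕ) < k then (h i - c) ^ 2 else 0))).mp hsum1
    have hall2 := (Finset.sum_eq_zero_iff_of_nonneg
      (fun (i : Fin n) (_ : i ∈ Finset.univ) =>
        (by positivity : (0:ℝ) ≤ if k ≤ (i : ℕ) then (h i - c) ^ 2 else 0))).mp hsum2
    refine ⟨ha, fun i hi => ?_⟩
    rcases Nat.lt_or_ge (i : ℕ) k with hik | hik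
    · have hz := hall1 i (Finset.mem_univ i)
      rw [if_pos ⟨hi, hik⟩] at hz
      have : h i - c = 0 := (pow_eq_zero_iff two_ne_zero).mp hz
      linarith
    · have hz := hall2 i (Finset.mem_univ i)
      rw [if_pos hik] at hz
      have : h i - c = 0 := (pow_eq_zero_iff two_ne_zero).mp hz
      linarith
  · -- backward direction
    rintro ⟨h0, hrest⟩
    have ha : a = 0 := h0
    have hic : ∀ i : Fin n, 1 ≤ (i : ℕ) → h i - c = 0 := by
      intro i hi
      rw [hrest i hi]
      ring
    have hq1z : q1 = 0 := by
      rw [hq1_def]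
      refine Finset.sum_eq_zero fun i _ => ?_
      by_cases hc2 : 1 ≤ (i : ℕ) ∧ (i : ℕ) < k
      · rw [if_pos hc2, hic i hc2.1]; ring
      · rw [if_neg hc2]
    have hq2z : q2 = 0 := by
      rw [hq2_def]
      refine Finset.sum_eq_zero fun i _ => ?_
      by_cases hc2 : k ≤ (i : ℕ)
      · rw [if_pos hc2, hic i (by omega)]; ring
      · rw [if_neg hc2]
    have hDz : D = 0 := by
      rw [hD_def]
      refine Finset.sum_eq_zero fun i _ => ?_
      by_cases hc2 : 1 ≤ (i : ℕ) ∧ (i : ℕ) < k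
      · rw [if_pos hc2]; exact hic i hc2.1
      · rw [if_neg hc2]
    rw [ha, hq1z, hq2z, hDz]
    ring
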